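/- Let α > 1. There exists C > 0 depending only on α such that for every t > 0 and every family (a_r)_{r∈[0,t]} of functions a_r : ℤ² → ℂ with a_r(0) = 0, such that r ↦ a_r(m) is continuous on [0,t] for every m and sup_{r∈[0,t]} ∑_{m∈ℤ²∖{0}} |m|^{−2α}|a_r(m)|² < ∞, one has: ∫₀ᵗ ∑_{k∈ℤ²∖{0}} |k|^{−2α} ( ∫ₛᵗ e^{−|k|²(r−s)} ( ∑_{ℓ∈ℤ², 0<|ℓ|≤1} |a_r(ℓ−k)|² )^{1/2} dr )² ds ≤ C t³ sup_{r∈[0,t]} ∑_{m∈ℤ²∖{0}} |m|^{−2α}|a_r(m)|². -/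

import Mathlib

open scoped ENNReal
open MeasureTheory intervalIntegral

set_option maxHeartbeats 1000000

/-- Squared Euclidean norm of a lattice point `k ∈ ℤ²`. -/
noncomputable def nsq (k : ℤ × ℤ) : ℝ := (k.1 : ℝ) ^ 2 + (k.2 : ℝ) ^ 2

/-- Deterministic core of the first bound of Lemma 4.3: for `α > 1` there is `C > 0` such that
for all `t > 0` and all families `(a_r)_{r∈[0,t]}` of Fourier data with `a_r 0 = 0`,
`r ↦ a_r m` continuous and `sup_{r∈[0,t]} ∑_{m≠0} |m|^{−2α}|a_r m|² < ∞`,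
`∫₀ᵗ ∑_{k≠0} |k|^{−2α} (∫ₛᵗ e^{−|k|²(r−s)} (∑_{0<|ℓ|≤1} |a_r(ℓ−k)|²)^{1/2} dr)² ds
  ≤ C t³ sup_{r∈[0,t]} ∑_{m≠0} |m|^{−2α}|a_r m|²`. -/
lemma nsq_nonneg (k : ℤ × ℤ) : 0 ≤ nsq k := by unfold nsq; positivity

lemma one_le_nsq {k : ℤ × ℤ} (hk : k ≠ 0) : 1 ≤ nsq k := by
  have hk' : ¬(k.1 = 0 ∧ k.2 = 0) := by
    rcases k with ⟨x, y⟩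
    simpa [Prod.ext_iff] using hk
  have h : (1 : ℤ) ≤ k.1 ^ 2 + k.2 ^ 2 := by
    rcases not_and_or.mp hk' with h | h
    · have := Int.one_le_abs h
      nlinarith [sq_nonneg k.2, sq_abs k.1]
    · have := Int.one_le_abs h
      nlinarith [sq_nonneg k.1, sq_abs k.2]
  have : (1 : ℝ) ≤ (k.1 : ℝ) ^ 2 + (k.2 : ℝ) ^ 2 := by exact_mod_cast h
  simpa [nsq] using this

lemma nsq_shift {k ℓ : ℤ × ℤ} (hk : k ≠ 0) (hl : nsq ℓ ≤ 1) : nsq (ℓ - k) ≤ 4 * nsq k := by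
  have h1 := one_le_nsq hk
  simp only [nsq, Prod.fst_sub, Prod.snd_sub, Int.cast_sub] at hl h1 ⊢
  nlinarith [sq_nonneg ((ℓ.1 : ℝ) + k.1), sq_nonneg ((ℓ.2 : ℝ) + k.2)]

lemma tsum_low (f : ℤ × ℤ → ℝ) :
    (∑' ℓ : ℤ × ℤ, if ℓ ≠ 0 ∧ nsq ℓ ≤ 1 then f ℓ else 0)
      = f (1, 0) + f (-1, 0) + f (0, 1) + f (0, -1) := by
  have hsupp : ∀ ℓ : ℤ × ℤ, ℓ ∉ ({(1,0), (-1,0), (0,1), (0,-1)} : Finset (ℤ × ℤ)) →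
      (if ℓ ≠ 0 ∧ nsq ℓ ≤ 1 then f ℓ else 0) = 0 := by
    rintro ⟨x, y⟩ hℓ
    rw [if_neg]
    rintro ⟨h0, h1⟩
    apply hℓ
    have h1' : x ^ 2 + y ^ 2 ≤ 1 := by
      have : ((x : ℝ)) ^ 2 + (y : ℝ) ^ 2 ≤ 1 := h1
      exact_mod_cast this
    have hx1 : -1 ≤ x := by nlinarith [sq_nonneg x, sq_nonneg y]
    have hx2 : x ≤ 1 := by nlinarith [sq_nonneg x, sq_nonneg y]
    have hy1 : -1 ≤ y := by nlinarith [sq_nonneg x, sq_nonneg y]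
    have hy2 : y ≤ 1 := by nlinarith [sq_nonneg x, sq_nonneg y]
    interval_cases x <;> interval_cases y <;> simp_all [Prod.ext_iff]
  rw [tsum_eq_sum hsupp]
  rw [show ({(1,0), (-1,0), (0,1), (0,-1)} : Finset (ℤ × ℤ))
    = insert (1,0) (insert (-1,0) (insert (0,1) {(0,-1)})) from rfl]
  rw [Finset.sum_insert (by decide), Finset.sum_insert (by decide),
    Finset.sum_insert (by decide), Finset.sum_singleton]
  have c1 : ((1,0) : ℤ × ℤ) ≠ 0 ∧ nsq (1,0) ≤ 1 := ⟨by decide, by norm_num [nsq]⟩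
  have c2 : ((-1,0) : ℤ × ℤ) ≠ 0 ∧ nsq (-1,0) ≤ 1 := ⟨by decide, by norm_num [nsq]⟩
  have c3 : ((0,1) : ℤ × ℤ) ≠ 0 ∧ nsq (0,1) ≤ 1 := ⟨by decide, by norm_num [nsq]⟩
  have c4 : ((0,-1) : ℤ × ℤ) ≠ 0 ∧ nsq (0,-1) ≤ 1 := ⟨by decide, by norm_num [nsq]⟩
  rw [if_pos c1, if_pos c2, if_pos c3, if_pos c4]
  ring

lemma sq_lintegral_le {μ : Measure ℝ} {g : ℝ → ℝ≥0∞} (hg : AEMeasurable g μ) :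
    (∫⁻ x, g x ∂μ) ^ 2 ≤ μ Set.univ * ∫⁻ x, g x ^ 2 ∂μ := by
  have hpq : (2 : ℝ).HolderConjugate 2 := by rw [Real.holderConjugate_iff]; norm_num
  have h := ENNReal.lintegral_mul_le_Lp_mul_Lq μ hpq (aemeasurable_const (b := (1 : ℝ≥0∞))) hg
  simp only [one_mul, Pi.mul_apply, Pi.one_apply, ENNReal.one_rpow, lintegral_const,
    ENNReal.rpow_two, one_pow] at h
  calc (∫⁻ x, g x ∂μ) ^ 2
      ≤ ((μ Set.univ) ^ (1/2:ℝ) * (∫⁻ x, g x ^ 2 ∂μ) ^ (1/2:ℝ)) ^ 2 :=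
        pow_le_pow_left' h 2
    _ = μ Set.univ * ∫⁻ x, g x ^ 2 ∂μ := by
        rw [mul_pow, ← ENNReal.rpow_two, ← ENNReal.rpow_two, ← ENNReal.rpow_mul,
          ← ENNReal.rpow_mul]
        norm_num

lemma tsum_shift_le {α : ℝ} (hα : 0 < α) (b : ℤ × ℤ → ℂ) (hb0 : b 0 = 0)
    {ℓ : ℤ × ℤ} (hl : nsq ℓ ≤ 1) :
    (∑' k : ℤ × ℤ, if k ≠ 0 then ENNReal.ofReal (nsq k ^ (-α) * ‖b (ℓ - k)‖ ^ 2) else 0)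
      ≤ ENNReal.ofReal ((4:ℝ) ^ α) *
        ∑' m : ℤ × ℤ, (if m ≠ 0 then ENNReal.ofReal (nsq m ^ (-α) * ‖b m‖ ^ 2) else 0) := by
  rw [← ENNReal.tsum_mul_left]
  rw [← (Equiv.subLeft ℓ).tsum_eq
    (fun m => ENNReal.ofReal ((4:ℝ) ^ α) *
      (if m ≠ 0 then ENNReal.ofReal (nsq m ^ (-α) * ‖b m‖ ^ 2) else 0))]
  apply ENNReal.tsum_le_tsum
  intro k
  simp only [Equiv.subLeft_apply]
  by_cases hk : k = 0
  · simp [hk]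
  rw [if_pos hk]
  by_cases hm : ℓ - k = 0
  · rw [hm, hb0]
    simp
  rw [if_pos hm]
  rw [← ENNReal.ofReal_mul (by positivity)]
  apply ENNReal.ofReal_le_ofReal
  rw [← mul_assoc]
  apply mul_le_mul_of_nonneg_right _ (by positivity)
  have h1 : (0:ℝ) < nsq (ℓ - k) := lt_of_lt_of_le one_pos (one_le_nsq hm)
  have h2 : nsq (ℓ - k) ≤ 4 * nsq k := nsq_shift hk hl
  have h3 : (4 * nsq k) ^ (-α) ≤ nsq (ℓ - k) ^ (-α) :=
    Real.rpow_le_rpow_of_nonpos h1 h2 (by linarith)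
  have h4 : (4 * nsq k) ^ (-α) = (4:ℝ) ^ (-α) * nsq k ^ (-α) :=
    Real.mul_rpow (by norm_num) (nsq_nonneg k)
  have h5 : (4:ℝ) ^ α * (4:ℝ) ^ (-α) = 1 := by
    rw [← Real.rpow_add (by norm_num)]
    simp
  calc nsq k ^ (-α) = (4:ℝ) ^ α * ((4:ℝ) ^ (-α) * nsq k ^ (-α)) := by
        rw [← mul_assoc, h5, one_mul]
    _ = (4:ℝ) ^ α * (4 * nsq k) ^ (-α) := by rw [h4]
    _ ≤ (4:ℝ) ^ α * nsq (ℓ - k) ^ (-α) :=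
        mul_le_mul_of_nonneg_left h3 (by positivity)

lemma sum_over_k_le {α : ℝ} (hα : 0 < α) (b : ℤ × ℤ → ℂ) (hb0 : b 0 = 0) :
    (∑' k : ℤ × ℤ, if k ≠ 0 then ENNReal.ofReal (nsq k ^ (-α) *
        (‖b ((1,0) - k)‖ ^ 2 + ‖b ((-1,0) - k)‖ ^ 2 + ‖b ((0,1) - k)‖ ^ 2
          + ‖b ((0,-1) - k)‖ ^ 2)) else 0)
      ≤ ENNReal.ofReal (4 * 4 ^ α) *
        ∑' m : ℤ × ℤ, (if m ≠ 0 then ENNReal.ofReal (nsq m ^ (-α) * ‖b m‖ ^ 2) else 0) := by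
  have hsplit : ∀ k : ℤ × ℤ,
      (if k ≠ 0 then ENNReal.ofReal (nsq k ^ (-α) *
        (‖b ((1,0) - k)‖ ^ 2 + ‖b ((-1,0) - k)‖ ^ 2 + ‖b ((0,1) - k)‖ ^ 2
          + ‖b ((0,-1) - k)‖ ^ 2)) else 0)
      = (if k ≠ 0 then ENNReal.ofReal (nsq k ^ (-α) * ‖b ((1,0) - k)‖ ^ 2) else 0)
        + (if k ≠ 0 then ENNReal.ofReal (nsq k ^ (-α) * ‖b ((-1,0) - k)‖ ^ 2) else 0)
        + (if k ≠ 0 then ENNReal.ofReal (nsq k ^ (-α) * ‖b ((0,1) - k)‖ ^ 2) else 0)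
        + (if k ≠ 0 then ENNReal.ofReal (nsq k ^ (-α) * ‖b ((0,-1) - k)‖ ^ 2) else 0) := by
    intro k
    by_cases hk : k = 0
    · simp [hk]
    · simp only [if_pos hk]
      have hnn : ∀ m : ℤ × ℤ, 0 ≤ nsq k ^ (-α) * ‖b m‖ ^ 2 :=
        fun m => mul_nonneg (Real.rpow_nonneg (nsq_nonneg k) _) (sq_nonneg _)
      rw [mul_add, mul_add, mul_add,
        ENNReal.ofReal_add (add_nonneg (add_nonneg (hnn _) (hnn _)) (hnn _)) (hnn _),
        ENNReal.ofReal_add (add_nonneg (hnn _) (hnn _)) (hnn _),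
        ENNReal.ofReal_add (hnn _) (hnn _)]
  simp only [hsplit]
  rw [ENNReal.tsum_add, ENNReal.tsum_add, ENNReal.tsum_add]
  have h1 := tsum_shift_le hα b hb0 (ℓ := (1,0)) (by norm_num [nsq])
  have h2 := tsum_shift_le hα b hb0 (ℓ := (-1,0)) (by norm_num [nsq])
  have h3 := tsum_shift_le hα b hb0 (ℓ := (0,1)) (by norm_num [nsq])
  have h4 := tsum_shift_le hα b hb0 (ℓ := (0,-1)) (by norm_num [nsq])
  calc _ ≤ ENNReal.ofReal ((4:ℝ) ^ α) * _ + ENNReal.ofReal ((4:ℝ) ^ α) * _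
        + ENNReal.ofReal ((4:ℝ) ^ α) * _ + ENNReal.ofReal ((4:ℝ) ^ α) * _ :=
      add_le_add (add_le_add (add_le_add h1 h2) h3) h4
    _ = _ := by
      rw [ENNReal.ofReal_mul (by norm_num)]
      rw [show ENNReal.ofReal (4:ℝ) = 4 from by norm_num [ENNReal.ofReal_ofNat]]
      ring

theorem low_mode_gaussian_bound (α : ℝ) (hα : 1 < α) :
    ∃ C : ℝ, 0 < C ∧ ∀ t : ℝ, 0 < t → ∀ a : ℝ → (ℤ × ℤ) → ℂ,
      (∀ r ∈ Set.Icc (0 : ℝ) t, a r 0 = 0) →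
      (∀ m : ℤ × ℤ, ContinuousOn (fun r => a r m) (Set.Icc 0 t)) →
      (⨆ r ∈ Set.Icc (0 : ℝ) t, ∑' m : ℤ × ℤ,
          (if m ≠ 0 then ENNReal.ofReal ((nsq m) ^ (-α) * ‖a r m‖ ^ 2) else 0)) < ⊤ →
      (∫⁻ s in Set.Ioc (0 : ℝ) t, ∑' k : ℤ × ℤ,
          (if k ≠ 0 then
            ENNReal.ofReal ((nsq k) ^ (-α) *
              (∫ r in s..t, Real.exp (-nsq k * (r - s)) *
                Real.sqrt (∑' ℓ : ℤ × ℤ,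
                  if ℓ ≠ 0 ∧ nsq ℓ ≤ 1 then ‖a r (ℓ - k)‖ ^ 2 else 0)) ^ 2)
          else 0)) ≤
        ENNReal.ofReal (C * t ^ 3) *
          ⨆ r ∈ Set.Icc (0 : ℝ) t, ∑' m : ℤ × ℤ,
            (if m ≠ 0 then ENNReal.ofReal ((nsq m) ^ (-α) * ‖a r m‖ ^ 2) else 0) := by
  have hα0 : (0:ℝ) < α := by linarith
  refine ⟨4 * 4 ^ α, by positivity, ?_⟩
  intro t ht a ha0 hacont hM
  set M := ⨆ r ∈ Set.Icc (0 : ℝ) t, ∑' m : ℤ × ℤ,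
      (if m ≠ 0 then ENNReal.ofReal ((nsq m) ^ (-α) * ‖a r m‖ ^ 2) else 0) with hMdef
  -- the four-point function
  set F : (ℤ × ℤ) → ℝ → ℝ := fun k r =>
    ‖a r ((1,0) - k)‖ ^ 2 + ‖a r ((-1,0) - k)‖ ^ 2 + ‖a r ((0,1) - k)‖ ^ 2
      + ‖a r ((0,-1) - k)‖ ^ 2 with hFdef
  have hF_eq : ∀ k : ℤ × ℤ, ∀ r : ℝ,
      (∑' ℓ : ℤ × ℤ, if ℓ ≠ 0 ∧ nsq ℓ ≤ 1 then ‖a r (ℓ - k)‖ ^ 2 else 0) = F k r :=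
    fun k r => tsum_low (fun ℓ => ‖a r (ℓ - k)‖ ^ 2)
  have hF_nonneg : ∀ k r, 0 ≤ F k r := fun k r => by positivity
  have hF_cont : ∀ k, ContinuousOn (F k) (Set.Icc 0 t) := by
    intro k
    exact ((((hacont _).norm.pow 2).add ((hacont _).norm.pow 2)).add
      ((hacont _).norm.pow 2)).add ((hacont _).norm.pow 2)
  simp only [hF_eq]
  -- pointwise bound in s
  have hpoint : ∀ s ∈ Set.Ioc (0:ℝ) t,
      (∑' k : ℤ × ℤ, if k ≠ 0 then
          ENNReal.ofReal ((nsq k) ^ (-α) *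
            (∫ r in s..t, Real.exp (-nsq k * (r - s)) * Real.sqrt (F k r)) ^ 2)
        else 0)
      ≤ ENNReal.ofReal ((4 * 4 ^ α) * t ^ 2) * M := by
    intro s hs
    have hst : s ≤ t := hs.2
    have hs0 : 0 < s := hs.1
    have hsub : Set.Icc s t ⊆ Set.Icc (0:ℝ) t := Set.Icc_subset_Icc hs0.le le_rfl
    have hsub' : Set.Ioc s t ⊆ Set.Icc (0:ℝ) t :=
      Set.Subset.trans Set.Ioc_subset_Icc_self hsub
    set h : (ℤ × ℤ) → ℝ → ℝ≥0∞ := fun k r =>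
      if k ≠ 0 then ENNReal.ofReal ((nsq k) ^ (-α) * F k r) else 0 with hhdef
    have hmeas : ∀ k, AEMeasurable (h k) (volume.restrict (Set.Ioc s t)) := by
      intro k
      by_cases hk : k = 0
      · simp [hhdef, hk]
      · simp only [hhdef, if_pos hk]
        exact (((hF_cont k).mono hsub').aemeasurable measurableSet_Ioc).const_mul
          _ |>.ennreal_ofReal
    -- per-k bound
    have hk_bound : ∀ k : ℤ × ℤ,
        (if k ≠ 0 then
          ENNReal.ofReal ((nsq k) ^ (-α) *
            (∫ r in s..t, Real.exp (-nsq k * (r - s)) * Real.sqrt (F k r)) ^ 2)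
        else 0)
        ≤ ENNReal.ofReal t * ∫⁻ r in Set.Ioc s t, h k r := by
      intro k
      by_cases hk : k = 0
      · simp [hk]
      simp only [if_pos hk, hhdef]
      set g : ℝ → ℝ := fun r => Real.exp (-nsq k * (r - s)) * Real.sqrt (F k r) with hgdef
      have hg_cont : ContinuousOn g (Set.Icc s t) := by
        apply ContinuousOn.mul
        · exact (Real.continuous_exp.comp
            (continuous_const.mul (continuous_id.sub continuous_const))).continuousOn
        · exact Real.continuous_sqrt.comp_continuousOn ((hF_cont k).mono hsub)
      have hg_int : IntegrableOn g (Set.Ioc s t) volume :=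
        (hg_cont.integrableOn_Icc).mono_set Set.Ioc_subset_Icc_self
      have hg_nonneg : ∀ r, 0 ≤ g r := fun r => by
        have := hF_nonneg k r
        positivity
      have hI : (∫ r in s..t, g r) = ∫ r in Set.Ioc s t, g r :=
        intervalIntegral.integral_of_le hst
      have hI0 : 0 ≤ ∫ r in s..t, g r := by
        rw [hI]
        exact setIntegral_nonneg measurableSet_Ioc (fun r _ => hg_nonneg r)
      have step3 : ENNReal.ofReal (∫ r in s..t, g r)
          = ∫⁻ r in Set.Ioc s t, ENNReal.ofReal (g r) := by
        rw [hI]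
        exact ofReal_integral_eq_lintegral_ofReal hg_int
          (Filter.Eventually.of_forall fun r => hg_nonneg r)
      have step4 : (∫⁻ r in Set.Ioc s t, ENNReal.ofReal (g r))
          ≤ ∫⁻ r in Set.Ioc s t, ENNReal.ofReal (Real.sqrt (F k r)) := by
        apply setLIntegral_mono' measurableSet_Ioc
        intro r hr
        apply ENNReal.ofReal_le_ofReal
        have hexp : Real.exp (-nsq k * (r - s)) ≤ 1 := by
          rw [Real.exp_le_one_iff]
          have : 0 ≤ nsq k * (r - s) := mul_nonneg (nsq_nonneg k) (by linarith [hr.1])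
          linarith
        exact mul_le_of_le_one_left (Real.sqrt_nonneg _) hexp
      have hsqrt_meas : AEMeasurable (fun r => ENNReal.ofReal (Real.sqrt (F k r)))
          (volume.restrict (Set.Ioc s t)) :=
        ((Real.continuous_sqrt.comp_continuousOn ((hF_cont k).mono hsub')).aemeasurable
          measurableSet_Ioc).ennreal_ofReal
      have step5 : (∫⁻ r in Set.Ioc s t, ENNReal.ofReal (Real.sqrt (F k r))) ^ 2
          ≤ ENNReal.ofReal (t - s) * ∫⁻ r in Set.Ioc s t, ENNReal.ofReal (F k r) := by
        have hCS := sq_lintegral_le hsqrt_meas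
        rw [Measure.restrict_apply_univ, Real.volume_Ioc] at hCS
        calc (∫⁻ r in Set.Ioc s t, ENNReal.ofReal (Real.sqrt (F k r))) ^ 2
            ≤ ENNReal.ofReal (t - s) *
              ∫⁻ r in Set.Ioc s t, ENNReal.ofReal (Real.sqrt (F k r)) ^ 2 := hCS
          _ = ENNReal.ofReal (t - s) * ∫⁻ r in Set.Ioc s t, ENNReal.ofReal (F k r) := by
              congr 1
              apply lintegral_congr
              intro r
              rw [← ENNReal.ofReal_pow (Real.sqrt_nonneg _), Real.sq_sqrt (hF_nonneg k r)]
      have hc_nonneg : (0:ℝ) ≤ (nsq k) ^ (-α) := Real.rpow_nonneg (nsq_nonneg k) _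
      calc ENNReal.ofReal ((nsq k) ^ (-α) * (∫ r in s..t, g r) ^ 2)
          = ENNReal.ofReal ((nsq k) ^ (-α)) * ENNReal.ofReal (∫ r in s..t, g r) ^ 2 := by
            rw [ENNReal.ofReal_mul hc_nonneg, ENNReal.ofReal_pow hI0]
        _ ≤ ENNReal.ofReal ((nsq k) ^ (-α)) *
            (ENNReal.ofReal (t - s) * ∫⁻ r in Set.Ioc s t, ENNReal.ofReal (F k r)) := by
            apply mul_le_mul_right
            refine le_trans ?_ step5
            rw [step3]
            exact pow_le_pow_left' step4 2
        _ ≤ ENNReal.ofReal ((nsq k) ^ (-α)) *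
            (ENNReal.ofReal t * ∫⁻ r in Set.Ioc s t, ENNReal.ofReal (F k r)) := by
            apply mul_le_mul_right
            exact mul_le_mul_left (ENNReal.ofReal_le_ofReal (by linarith)) _
        _ = ENNReal.ofReal t *
            (ENNReal.ofReal ((nsq k) ^ (-α)) * ∫⁻ r in Set.Ioc s t, ENNReal.ofReal (F k r)) := by
            ring
        _ = ENNReal.ofReal t * ∫⁻ r in Set.Ioc s t,
              ENNReal.ofReal ((nsq k) ^ (-α)) * ENNReal.ofReal (F k r) := by
            rw [lintegral_const_mul' _ _ ENNReal.ofReal_ne_top]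
        _ = ENNReal.ofReal t * ∫⁻ r in Set.Ioc s t, ENNReal.ofReal ((nsq k) ^ (-α) * F k r) := by
            congr 1
            apply lintegral_congr
            intro r
            rw [ENNReal.ofReal_mul hc_nonneg]
    calc (∑' k : ℤ × ℤ, if k ≠ 0 then
          ENNReal.ofReal ((nsq k) ^ (-α) *
            (∫ r in s..t, Real.exp (-nsq k * (r - s)) * Real.sqrt (F k r)) ^ 2)
        else 0)
        ≤ ∑' k : ℤ × ℤ, ENNReal.ofReal t * ∫⁻ r in Set.Ioc s t, h k r :=
          ENNReal.tsum_le_tsum hk_bound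
      _ = ENNReal.ofReal t * ∑' k : ℤ × ℤ, ∫⁻ r in Set.Ioc s t, h k r :=
          ENNReal.tsum_mul_left
      _ = ENNReal.ofReal t * ∫⁻ r in Set.Ioc s t, ∑' k : ℤ × ℤ, h k r := by
          rw [lintegral_tsum hmeas]
      _ ≤ ENNReal.ofReal t * ∫⁻ _ in Set.Ioc s t, ENNReal.ofReal (4 * 4 ^ α) * M := by
          apply mul_le_mul_right
          apply setLIntegral_mono' measurableSet_Ioc
          intro r hr
          have hr' : r ∈ Set.Icc (0:ℝ) t := hsub' hr
          refine le_trans (sum_over_k_le hα0 (a r) (ha0 r hr')) ?_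
          apply mul_le_mul_right
          exact le_biSup (fun r => ∑' m : ℤ × ℤ,
            if m ≠ 0 then ENNReal.ofReal (nsq m ^ (-α) * ‖a r m‖ ^ 2) else 0) hr'
      _ = ENNReal.ofReal t * (ENNReal.ofReal (4 * 4 ^ α) * M * ENNReal.ofReal (t - s)) := by
          rw [setLIntegral_const, Real.volume_Ioc]
      _ ≤ ENNReal.ofReal t * (ENNReal.ofReal (4 * 4 ^ α) * M * ENNReal.ofReal t) := by
          apply mul_le_mul_right
          exact mul_le_mul_right (ENNReal.ofReal_le_ofReal (by linarith)) _
      _ = ENNReal.ofReal ((4 * 4 ^ α) * t ^ 2) * M := by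
          rw [ENNReal.ofReal_mul (by positivity : (0:ℝ) ≤ 4 * 4 ^ α),
            ENNReal.ofReal_pow ht.le]
          ring
  calc (∫⁻ s in Set.Ioc (0:ℝ) t, ∑' k : ℤ × ℤ,
        (if k ≠ 0 then
          ENNReal.ofReal ((nsq k) ^ (-α) *
            (∫ r in s..t, Real.exp (-nsq k * (r - s)) * Real.sqrt (F k r)) ^ 2)
        else 0))
      ≤ ∫⁻ _ in Set.Ioc (0:ℝ) t, ENNReal.ofReal ((4 * 4 ^ α) * t ^ 2) * M :=
        setLIntegral_mono' measurableSet_Ioc hpoint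
    _ = ENNReal.ofReal ((4 * 4 ^ α) * t ^ 2) * M * ENNReal.ofReal t := by
        rw [setLIntegral_const, Real.volume_Ioc, sub_zero]
    _ = ENNReal.ofReal ((4 * 4 ^ α) * t ^ 3) * M := by
        rw [ENNReal.ofReal_mul (by positivity : (0:ℝ) ≤ 4 * 4 ^ α),
          ENNReal.ofReal_mul (by positivity : (0:ℝ) ≤ 4 * 4 ^ α),
          ENNReal.ofReal_pow ht.le, ENNReal.ofReal_pow ht.le]
        ring
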